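/- Let κ ∈ ℂ, δ > 0, S > 0, and let R > 1 satisfy exp(R−1) > −log δ and exp(R) ≥ exp(R−1) + S + 1 + |κ|. Suppose z ∈ ℂ satisfies Re(z) ≥ R and, for all n ≥ 1, |Im(E_κ^n(z))| < S and Re(E_κ^n(z)) > log δ. Then for all n ≥ 1, Re(E_κ^n(z)) − 1 > exp^n(Re(z) − 1), where exp^n denotes the n-th iterate of the real exponential function. -/

import Mathlib

open Complex

lemma iter_exp_ge (x : ℝ) : ∀ n : ℕ, x ≤ Real.exp^[n] x := by
  intro n
  induction n with
  | zero => simp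
  | succ n ih =>
    rw [Function.iterate_succ_apply']
    calc x ≤ Real.exp^[n] x := ih
    _ ≤ Real.exp (Real.exp^[n] x) := by
        have := Real.add_one_le_exp (Real.exp^[n] x); linarith

lemma key_step (κ : ℂ) (δ S R : ℝ) (hδ : 0 < δ) (hS : 0 < S)
    (hR : 1 < R)
    (hR1 : Real.exp (R - 1) > -Real.log δ)
    (hR2 : Real.exp R ≥ Real.exp (R - 1) + S + 1 + ‖κ‖)
    (w : ℂ) (hw : R ≤ w.re)
    (him : |(Complex.exp w + κ).im| < S)
    (hre : (Complex.exp w + κ).re > Real.log δ) :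
    (Complex.exp w + κ).re - 1 > Real.exp (w.re - 1) := by
  set u := Complex.exp w + κ with hu
  have habs : ‖u‖ ≥ Real.exp w.re - ‖κ‖ := by
    have h := norm_sub_le u κ
    have h2 : u - κ = Complex.exp w := by rw [hu]; ring
    rw [h2, Complex.norm_exp] at h
    linarith
  have h1 : ‖u‖ ≤ |u.re| + |u.im| := Complex.norm_le_abs_re_add_abs_im u
  have h2 : |u.re| > Real.exp w.re - ‖κ‖ - S := by
    have := abs_nonneg u.im
    linarith
  have hmono : Real.exp R ≤ Real.exp w.re := Real.exp_le_exp.2 hw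
  have hmono1 : Real.exp (R - 1) ≤ Real.exp (w.re - 1) := Real.exp_le_exp.2 (by linarith)
  have h3 : |u.re| > Real.exp (R - 1) + 1 := by linarith
  have hpos : u.re > 0 := by
    by_contra h
    push_neg at h
    have : |u.re| = -u.re := abs_of_nonpos h
    linarith
  have h4 : u.re > Real.exp w.re - ‖κ‖ - S := by
    rwa [abs_of_pos hpos] at h2
  -- exp R - exp (R-1) ≤ exp w.re - exp (w.re - 1)
  have h5 : Real.exp R - Real.exp (R - 1) ≤ Real.exp w.re - Real.exp (w.re - 1) := by
    have e1 : Real.exp (R - 1) = Real.exp R * Real.exp (-1) := by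
      rw [← Real.exp_add]; ring_nf
    have e2 : Real.exp (w.re - 1) = Real.exp w.re * Real.exp (-1) := by
      rw [← Real.exp_add]; ring_nf
    have he : Real.exp (-1) < 1 := by
      rw [Real.exp_lt_one_iff]; norm_num
    nlinarith [Real.exp_pos R]
  linarith

/-- Under the conditions of the paper's final proof, the real parts of the orbit of `z`
under `E_κ(w) = exp w + κ` grow at least like iterated real exponentials:
`Re (E_κ^[n] z) - 1 > exp^[n] (Re z - 1)` for all `n ≥ 1`. -/
theorem orbit_re_grows_iterated_exp (κ : ℂ) (δ S R : ℝ) (hδ : 0 < δ) (hS : 0 < S)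
    (hR : 1 < R)
    (hR1 : Real.exp (R - 1) > -Real.log δ)
    (hR2 : Real.exp R ≥ Real.exp (R - 1) + S + 1 + ‖κ‖)
    (z : ℂ) (hz : R ≤ z.re)
    (him : ∀ n : ℕ, 1 ≤ n → |((fun w => Complex.exp w + κ)^[n] z).im| < S)
    (hre : ∀ n : ℕ, 1 ≤ n → ((fun w => Complex.exp w + κ)^[n] z).re > Real.log δ) :
    ∀ n : ℕ, 1 ≤ n →
      ((fun w => Complex.exp w + κ)^[n] z).re - 1 > Real.exp^[n] (z.re - 1) := by
  intro n hn
  induction n with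
  | zero => omega
  | succ n ih =>
    set f : ℂ → ℂ := fun w => Complex.exp w + κ with hf
    rcases Nat.eq_zero_or_pos n with h0 | hpos
    · subst h0
      have := key_step κ δ S R hδ hS hR hR1 hR2 z hz
        (by have := him 1 le_rfl; rwa [Function.iterate_one] at this)
        (by have := hre 1 le_rfl; rwa [Function.iterate_one] at this)
      rw [Function.iterate_one, Function.iterate_one]
      exact this
    · have ih' := ih hpos
      set w : ℂ := f^[n] z with hw
      have hwre : R ≤ w.re := by
        have h1 : z.re - 1 ≤ Real.exp^[n] (z.re - 1) := iter_exp_ge _ n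
        linarith
      have hstep := key_step κ δ S R hδ hS hR hR1 hR2 w hwre
        (by have := him (n+1) (by omega); rwa [Function.iterate_succ_apply'] at this)
        (by have := hre (n+1) (by omega); rwa [Function.iterate_succ_apply'] at this)
      rw [Function.iterate_succ_apply', Function.iterate_succ_apply']
      have : Real.exp (Real.exp^[n] (z.re - 1)) < Real.exp (w.re - 1) :=
        Real.exp_lt_exp.2 (by linarith)
      calc Real.exp (Real.exp^[n] (z.re - 1)) < Real.exp (w.re - 1) := this
      _ < (f w).re - 1 := hstep
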